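/- Let ω > 0, T = 2π/ω, let n be an odd positive integer, and set ȳ₀ = (e^{nT/2} − 1)/(e^{nT/2} + 1), C₁ = (ȳ₀ − 1)/2 and C₂ = −(ȳ₀ + 1)/2. Then for every t₀ ∈ ℝ, −[ ∫₀^{nT/2} (C₁ eᵗ − C₂ e^{−t}) cos(ω(t + t₀)) dt + ∫_{nT/2}^{nT} (−C₁ e^{t − nT/2} + C₂ e^{−t + nT/2}) cos(ω(t + t₀)) dt ] = −(4/(ω² + 1)) cos(ω t₀). In particular this function of t₀ has exactly two zeros in [0, T), at t₀ = T/4 and t₀ = 3T/4, and both are simple. -/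

import Mathlib

noncomputable section

/-- The subharmonic Melnikov function `M^{n,1}` of the linearized rocking
block, written as `−∫₀^{nT} Π_y(q_c(t)) cos(ω(t + t₀)) dt` with `a = nT/2`:
the `y`-component of the unperturbed orbit is `C₁eᵗ − C₂e^{−t}` on `[0, a]`
and `−C₁e^{t−a} + C₂e^{−t+a}` on `[a, 2a]`. -/
def rockingMelnikov (C₁ C₂ a ω : ℝ) (t₀ : ℝ) : ℝ :=
  -((∫ t in (0:ℝ)..a,
      (C₁ * Real.exp t - C₂ * Real.exp (-t)) * Real.cos (ω * (t + t₀))) +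
    ∫ t in a..(2 * a),
      (-C₁ * Real.exp (t - a) + C₂ * Real.exp (-t + a)) * Real.cos (ω * (t + t₀)))

lemma melKey (c₁ c₂ ω t₀ a : ℝ) :
    ∫ t in (0:ℝ)..a, (c₁ * Real.exp t - c₂ * Real.exp (-t)) * Real.cos (ω * (t + t₀))
    = ((c₁ * Real.exp a * (Real.cos (ω * (a + t₀)) + ω * Real.sin (ω * (a + t₀)))
        + c₂ * Real.exp (-a) * (Real.cos (ω * (a + t₀)) - ω * Real.sin (ω * (a + t₀))))
       - (c₁ * (Real.cos (ω * t₀) + ω * Real.sin (ω * t₀))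
        + c₂ * (Real.cos (ω * t₀) - ω * Real.sin (ω * t₀)))) / (ω ^ 2 + 1) := by
  have hne : (ω:ℝ) ^ 2 + 1 ≠ 0 := by positivity
  have hderiv : ∀ t ∈ Set.uIcc (0:ℝ) a,
      HasDerivAt (fun t => (c₁ * Real.exp t * (Real.cos (ω * (t + t₀)) + ω * Real.sin (ω * (t + t₀)))
        + c₂ * Real.exp (-t) * (Real.cos (ω * (t + t₀)) - ω * Real.sin (ω * (t + t₀)))) / (ω ^ 2 + 1))
        ((c₁ * Real.exp t - c₂ * Real.exp (-t)) * Real.cos (ω * (t + t₀))) t := by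
    intro t _
    have hθ : HasDerivAt (fun t : ℝ => ω * (t + t₀)) ω t := by
      simpa using ((hasDerivAt_id t).add_const t₀).const_mul ω
    have hcos : HasDerivAt (fun t : ℝ => Real.cos (ω * (t + t₀)))
        (-Real.sin (ω * (t + t₀)) * ω) t := (Real.hasDerivAt_cos _).comp t hθ
    have hsin : HasDerivAt (fun t : ℝ => Real.sin (ω * (t + t₀)))
        (Real.cos (ω * (t + t₀)) * ω) t := (Real.hasDerivAt_sin _).comp t hθ
    have hexp : HasDerivAt (fun t : ℝ => Real.exp t) (Real.exp t) t := Real.hasDerivAt_exp t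
    have hexpn : HasDerivAt (fun t : ℝ => Real.exp (-t)) (-Real.exp (-t)) t := by
      simpa [Function.comp_def] using (Real.hasDerivAt_exp (-t)).comp t (hasDerivAt_neg t)
    have h1 := ((hexp.mul (hcos.add (hsin.const_mul ω))).const_mul c₁)
    have h2 := ((hexpn.mul (hcos.sub (hsin.const_mul ω))).const_mul c₂)
    have h3 : HasDerivAt (_ : ℝ → ℝ) _ t := (h1.add h2).div_const (ω ^ 2 + 1)
    convert h3 using 1
    · ext t; simp only [Pi.add_apply, Pi.sub_apply, Pi.mul_apply]; ring
    · simp only [Pi.add_apply, Pi.sub_apply]; rw [eq_div_iff hne]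
      ring
  have hint : IntervalIntegrable
      (fun t => (c₁ * Real.exp t - c₂ * Real.exp (-t)) * Real.cos (ω * (t + t₀)))
      MeasureTheory.volume 0 a := by
    apply Continuous.intervalIntegrable
    fun_prop
  rw [intervalIntegral.integral_eq_sub_of_hasDerivAt hderiv hint]
  simp only [neg_zero, Real.exp_zero, zero_add]
  ring

lemma melShift (C₁ C₂ ω t₀ a : ℝ) :
    (∫ t in a..(2*a), (-C₁ * Real.exp (t - a) + C₂ * Real.exp (-t + a)) * Real.cos (ω * (t + t₀)))
    = ∫ t in (0:ℝ)..a, ((-C₁) * Real.exp t - (-C₂) * Real.exp (-t)) * Real.cos (ω * (t + (a + t₀))) := by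
  have h := intervalIntegral.integral_comp_add_right (a := 0) (b := a)
    (fun t => (-C₁ * Real.exp (t - a) + C₂ * Real.exp (-t + a)) * Real.cos (ω * (t + t₀))) a
  simp only [zero_add] at h
  rw [show a + a = 2*a by ring] at h
  rw [← h]
  apply intervalIntegral.integral_congr
  intro t ht
  have h1 : t + a - a = t := by ring
  have h2 : -(t + a) + a = -t := by ring
  have h3 : ω * (t + a + t₀) = ω * (t + (a + t₀)) := by ring
  simp only [h1, h2, h3]
  ring


set_option maxHeartbeats 1000000 in
/-- for the linearized rocking block with `T = 2π/ω`, `n` odd,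
`ȳ₀ = (e^{nT/2} − 1)/(e^{nT/2} + 1)`, `C₁ = (ȳ₀ − 1)/2`, `C₂ = −(ȳ₀ + 1)/2`,
the subharmonic Melnikov function equals `−(4/(ω² + 1)) cos(ω t₀)`; in
particular it has exactly two zeros in `[0, T)`, at `T/4` and `3T/4`, and both
are simple. -/
theorem rocking_block_melnikov_m1 (ω T : ℝ) (hω : 0 < ω) (hT : T = 2 * Real.pi / ω)
    (n : ℕ) (hodd : Odd n) (hn : 0 < n)
    (ybar C₁ C₂ : ℝ)
    (hybar : ybar = (Real.exp ((n : ℝ) * T / 2) - 1) / (Real.exp ((n : ℝ) * T / 2) + 1))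
    (hC₁ : C₁ = (ybar - 1) / 2) (hC₂ : C₂ = -(ybar + 1) / 2) :
    (∀ t₀ : ℝ, rockingMelnikov C₁ C₂ ((n : ℝ) * T / 2) ω t₀
        = -(4 / (ω ^ 2 + 1)) * Real.cos (ω * t₀)) ∧
    (∀ t₀ ∈ Set.Ico (0:ℝ) T,
        (rockingMelnikov C₁ C₂ ((n : ℝ) * T / 2) ω t₀ = 0 ↔
          t₀ = T / 4 ∨ t₀ = 3 * T / 4)) ∧
    deriv (rockingMelnikov C₁ C₂ ((n : ℝ) * T / 2) ω) (T / 4) ≠ 0 ∧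
    deriv (rockingMelnikov C₁ C₂ ((n : ℝ) * T / 2) ω) (3 * T / 4) ≠ 0 := by
  have hω' : ω ≠ 0 := ne_of_gt hω
  set a : ℝ := (n : ℝ) * T / 2 with ha_def
  have ha : ω * a = (n : ℝ) * Real.pi := by
    rw [ha_def, hT]; field_simp
  have hspi : Real.sin ((n:ℝ) * Real.pi) = 0 := Real.sin_nat_mul_pi n
  have hcpi : Real.cos ((n:ℝ) * Real.pi) = -1 := by
    have h := Real.cos_nat_mul_pi_sub 0 n
    simpa [hodd.neg_one_pow] using h
  have hs2 : Real.sin ((n:ℝ) * (2 * Real.pi)) = 0 := by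
    rw [show (n:ℝ) * (2 * Real.pi) = ((2*n : ℕ):ℝ) * Real.pi by push_cast; ring]
    exact Real.sin_nat_mul_pi _
  have hc2 : Real.cos ((n:ℝ) * (2 * Real.pi)) = 1 := Real.cos_nat_mul_two_pi n
  -- part 1
  have part1 : ∀ t₀ : ℝ, rockingMelnikov C₁ C₂ a ω t₀
      = -(4 / (ω ^ 2 + 1)) * Real.cos (ω * t₀) := by
    intro t₀
    have e1 : ω * (a + t₀) = (n:ℝ) * Real.pi + ω * t₀ := by rw [← ha]; ring
    have e2 : ω * (a + (a + t₀)) = (n:ℝ) * (2 * Real.pi) + ω * t₀ := by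
      rw [show (n:ℝ) * (2 * Real.pi) = 2 * (ω * a) by rw [ha]; ring]; ring
    have c1 : Real.cos (ω * (a + t₀)) = -Real.cos (ω * t₀) := by
      rw [e1, Real.cos_add, hcpi, hspi]; ring
    have s1 : Real.sin (ω * (a + t₀)) = -Real.sin (ω * t₀) := by
      rw [e1, Real.sin_add, hcpi, hspi]; ring
    have c2' : Real.cos (ω * (a + (a + t₀))) = Real.cos (ω * t₀) := by
      rw [e2, Real.cos_add, hc2, hs2]; ring
    have s2' : Real.sin (ω * (a + (a + t₀))) = Real.sin (ω * t₀) := by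
      rw [e2, Real.sin_add, hc2, hs2]; ring
    have hEpos : 0 < Real.exp a := Real.exp_pos a
    have hE1 : Real.exp a + 1 ≠ 0 := by positivity
    have hne : (ω:ℝ) ^ 2 + 1 ≠ 0 := by positivity
    rw [rockingMelnikov, melShift, melKey, melKey, c1, s1, c2', s2', hC₁, hC₂, hybar,
      Real.exp_neg]
    field_simp
    ring
  have hπ := Real.pi_pos
  have hcoef : -(4 / (ω ^ 2 + 1)) ≠ 0 := by
    have : (0:ℝ) < 4 / (ω ^ 2 + 1) := by positivity
    linarith
  have hfun : rockingMelnikov C₁ C₂ a ω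
      = fun t₀ => -(4 / (ω ^ 2 + 1)) * Real.cos (ω * t₀) := funext part1
  have hd : ∀ x : ℝ, deriv (fun t₀ : ℝ => -(4 / (ω ^ 2 + 1)) * Real.cos (ω * t₀)) x
      = -(4 / (ω ^ 2 + 1)) * (-Real.sin (ω * x) * ω) := by
    intro x
    have hin : HasDerivAt (fun t : ℝ => ω * t) ω x := by
      simpa using (hasDerivAt_id x).const_mul ω
    exact (((Real.hasDerivAt_cos _).comp _ hin).const_mul _).deriv
  have hpos : (0:ℝ) < 4 / (ω ^ 2 + 1) * ω := by positivity
  refine ⟨part1, ?_, ?_, ?_⟩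
  · rintro t₀ ⟨h0, hlt⟩
    rw [part1 t₀]
    constructor
    · intro h
      have hcz : Real.cos (ω * t₀) = 0 := by
        rcases mul_eq_zero.mp h with h' | h'
        · exact absurd h' hcoef
        · exact h'
      rw [Real.cos_eq_zero_iff] at hcz
      obtain ⟨k, hk⟩ := hcz
      have hb1 : 0 ≤ ω * t₀ := mul_nonneg hω.le h0
      have hb2 : ω * t₀ < 2 * Real.pi := by
        have := (mul_lt_mul_iff_right₀ hω).mpr hlt
        rw [hT] at this
        calc ω * t₀ < ω * (2 * Real.pi / ω) := this
          _ = 2 * Real.pi := by field_simp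
      rw [hk] at hb1 hb2
      have hr1 : 0 ≤ 2 * (k:ℝ) + 1 := by nlinarith
      have hr2 : 2 * (k:ℝ) + 1 < 4 := by nlinarith
      have hk0 : (0:ℤ) ≤ k := by
        have h' : (-1:ℝ) < (k:ℝ) := by linarith
        have h'' : (-1:ℤ) < k := by exact_mod_cast h'
        omega
      have hk1 : k < 2 := by
        have : (k:ℝ) < 2 := by linarith
        exact_mod_cast this
      interval_cases k
      · left
        have hk' : ω * t₀ = Real.pi / 2 := by rw [hk]; push_cast; ring
        rw [hT]
        field_simp
        field_simp at hk'
        linarith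
      · right
        have hk' : ω * t₀ = 3 * Real.pi / 2 := by rw [hk]; push_cast; ring
        rw [hT]
        field_simp
        field_simp at hk'
        linarith
    · rintro (rfl | rfl)
      · have : ω * (T / 4) = Real.pi / 2 := by rw [hT]; field_simp; ring
        rw [this, Real.cos_pi_div_two, mul_zero]
      · have : ω * (3 * T / 4) = Real.pi / 2 + Real.pi := by rw [hT]; field_simp; ring
        rw [this, Real.cos_add_pi, Real.cos_pi_div_two]
        ring
  · rw [hfun, hd]
    have : ω * (T / 4) = Real.pi / 2 := by rw [hT]; field_simp; ring
    rw [this, Real.sin_pi_div_two]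
    intro hcontra
    nlinarith
  · rw [hfun, hd]
    have : ω * (3 * T / 4) = Real.pi / 2 + Real.pi := by rw [hT]; field_simp; ring
    rw [this, Real.sin_add_pi, Real.sin_pi_div_two]
    intro hcontra
    nlinarith
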